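/- Let η : (0,2] → (0,1] and b > 0. Define η₁ : [0,∞) → [0,1] by η₁(0) := 0 and η₁(ε) := sup{η(ε') : 0 < ε' ≤ min{2, ε}} for ε > 0; define η̃(ε) := (1/2)·∫₀^ε η₁(t) dt and γ(ε) := (b/2)·η̃(4ε/b). Let γ⁻¹ : [0,∞) → [0,∞) be a two-sided inverse of γ on [0,∞) (γ(γ⁻¹(s)) = s and γ⁻¹(γ(s)) = s for all s ≥ 0). Define q̃(ε) := γ⁻¹(3ε) + ε and ξ(t) := (t/12)·η(min{2, t/b}). Then for all p ∈ ℕ, ε > 0 and t ≥ 0: if t < ξ^p(ε) then q̃^p(t) < ε. -/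

import Mathlib

/-- `η₁(ε) := sup {η(ε') : 0 < ε' ≤ min 2 ε}` for `ε > 0`, and `η₁(ε) := 0` otherwise. -/
noncomputable def eta1 (η : ℝ → ℝ) (ε : ℝ) : ℝ :=
  if 0 < ε then sSup {y : ℝ | ∃ ε' : ℝ, 0 < ε' ∧ ε' ≤ min 2 ε ∧ y = η ε'} else 0

/-- `η̃(ε) := (1/2)·∫₀^ε η₁(t) dt`. -/
noncomputable def etaTilde (η : ℝ → ℝ) (ε : ℝ) : ℝ :=
  (1 / 2) * ∫ t in (0 : ℝ)..ε, eta1 η t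

/-- `γ(ε) := (b/2)·η̃(4ε/b)`. -/
noncomputable def gammaFun (η : ℝ → ℝ) (b : ℝ) (ε : ℝ) : ℝ :=
  (b / 2) * etaTilde η (4 * ε / b)

/-- `ξ(t) := (t/12)·η(min{2, t/b})`. -/
noncomputable def xiFun (η : ℝ → ℝ) (b : ℝ) (t : ℝ) : ℝ :=
  t / 12 * η (min 2 (t / b))

section Aux

variable {η : ℝ → ℝ}

lemma eta1_set_bddAbove (hη : ∀ ε : ℝ, 0 < ε → ε ≤ 2 → 0 < η ε ∧ η ε ≤ 1) (ε : ℝ) :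
    BddAbove {y : ℝ | ∃ ε' : ℝ, 0 < ε' ∧ ε' ≤ min 2 ε ∧ y = η ε'} := by
  refine ⟨1, fun y hy => ?_⟩
  obtain ⟨ε', hε'pos, hε'le, rfl⟩ := hy
  exact (hη ε' hε'pos (hε'le.trans (min_le_left _ _))).2

lemma eta1_mem {ε : ℝ} (hε : 0 < ε) :
    η (min 2 ε) ∈ {y : ℝ | ∃ ε' : ℝ, 0 < ε' ∧ ε' ≤ min 2 ε ∧ y = η ε'} :=
  ⟨min 2 ε, lt_min two_pos hε, le_refl _, rfl⟩

lemma eta1_ge (hη : ∀ ε : ℝ, 0 < ε → ε ≤ 2 → 0 < η ε ∧ η ε ≤ 1) {ε : ℝ} (hε : 0 < ε) : η (min 2 ε) ≤ eta1 η ε := by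
  rw [eta1, if_pos hε]
  exact le_csSup (eta1_set_bddAbove hη ε) (eta1_mem hε)

lemma eta1_nonneg (hη : ∀ ε : ℝ, 0 < ε → ε ≤ 2 → 0 < η ε ∧ η ε ≤ 1) (ε : ℝ) : 0 ≤ eta1 η ε := by
  by_cases hε : 0 < ε
  · exact le_trans (hη _ (lt_min two_pos hε) (min_le_left _ _)).1.le (eta1_ge hη hε)
  · rw [eta1, if_neg hε]

lemma eta1_le_one (hη : ∀ ε : ℝ, 0 < ε → ε ≤ 2 → 0 < η ε ∧ η ε ≤ 1) (ε : ℝ) : eta1 η ε ≤ 1 := by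
  by_cases hε : 0 < ε
  · rw [eta1, if_pos hε]
    refine csSup_le ⟨_, eta1_mem hε⟩ fun y hy => ?_
    obtain ⟨ε', hε'pos, hε'le, rfl⟩ := hy
    exact (hη ε' hε'pos (hε'le.trans (min_le_left _ _))).2
  · rw [eta1, if_neg hε]; exact zero_le_one

lemma eta1_mono (hη : ∀ ε : ℝ, 0 < ε → ε ≤ 2 → 0 < η ε ∧ η ε ≤ 1) : Monotone (eta1 η) := by
  intro x y hxy
  by_cases hx : 0 < x
  · have hy : 0 < y := hx.trans_le hxy
    rw [eta1, if_pos hx, eta1, if_pos hy]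
    refine csSup_le_csSup (eta1_set_bddAbove hη y) ⟨_, eta1_mem hx⟩ ?_
    rintro z ⟨ε', h1, h2, rfl⟩
    exact ⟨ε', h1, h2.trans (min_le_min le_rfl hxy), rfl⟩
  · rw [eta1, if_neg hx]
    exact eta1_nonneg hη y

lemma eta1_intable (hη : ∀ ε : ℝ, 0 < ε → ε ≤ 2 → 0 < η ε ∧ η ε ≤ 1) (a c : ℝ) : IntervalIntegrable (eta1 η) MeasureTheory.volume a c :=
  (eta1_mono hη).intervalIntegrable

/-- monotonicity of γ on nonnegative reals -/
lemma gamma_mono (hη : ∀ ε : ℝ, 0 < ε → ε ≤ 2 → 0 < η ε ∧ η ε ≤ 1) {b : ℝ} (hb : 0 < b) {x y : ℝ} (hx : 0 ≤ x) (hxy : x ≤ y) :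
    gammaFun η b x ≤ gammaFun η b y := by
  unfold gammaFun etaTilde
  have h1 : (0:ℝ) ≤ 4 * x / b := by positivity
  have h2 : 4 * x / b ≤ 4 * y / b := by gcongr
  have h3 := intervalIntegral.integral_mono_interval (μ := MeasureTheory.volume)
    (le_refl (0:ℝ)) h1 h2
    (MeasureTheory.ae_of_all _ fun t => eta1_nonneg hη t) (eta1_intable hη 0 _)
  nlinarith [mul_le_mul_of_nonneg_left h3 hb.le]

/-- key lower bound: γ(ε/2) ≥ (ε/4)·η(min 2 (ε/b)) -/
lemma gamma_lower (hη : ∀ ε : ℝ, 0 < ε → ε ≤ 2 → 0 < η ε ∧ η ε ≤ 1) {b : ℝ} (hb : 0 < b) {ε : ℝ} (hε : 0 < ε) :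
    ε / 4 * η (min 2 (ε / b)) ≤ gammaFun η b (ε / 2) := by
  set u := ε / b with hu
  have hupos : 0 < u := by positivity
  have harg : 4 * (ε / 2) / b = 2 * u := by rw [hu]; ring
  have hconst : ∀ s ∈ Set.Icc u (2 * u), η (min 2 u) ≤ eta1 η s := by
    intro s hs
    exact le_trans (eta1_ge hη hupos) (eta1_mono hη hs.1)
  have hint1 : u * η (min 2 u) ≤ ∫ t in u..(2*u), eta1 η t := by
    have := intervalIntegral.integral_mono_on (μ := MeasureTheory.volume)
      (f := fun _ => η (min 2 u)) (g := eta1 η) (by linarith)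
      intervalIntegrable_const (eta1_intable hη u (2*u)) hconst
    rwa [intervalIntegral.integral_const, smul_eq_mul, show 2*u - u = u by ring] at this
  have hint0 : 0 ≤ ∫ t in (0:ℝ)..u, eta1 η t :=
    intervalIntegral.integral_nonneg hupos.le fun t _ => eta1_nonneg hη t
  have hsplit : (∫ t in (0:ℝ)..u, eta1 η t) + (∫ t in u..(2*u), eta1 η t)
      = ∫ t in (0:ℝ)..(2*u), eta1 η t :=
    intervalIntegral.integral_add_adjacent_intervals (eta1_intable hη 0 u) (eta1_intable hη u (2*u))
  unfold gammaFun etaTilde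
  rw [harg]
  have hbu : b * u = ε := by rw [hu]; field_simp
  have hA : 0 ≤ b * ∫ t in (0:ℝ)..u, eta1 η t := mul_nonneg hb.le hint0
  have hC : b * (u * η (min 2 u)) ≤ b * ∫ t in u..(2*u), eta1 η t :=
    mul_le_mul_of_nonneg_left hint1 hb.le
  have hI : b * ∫ t in (0:ℝ)..(2*u), eta1 η t
      = (b * ∫ t in (0:ℝ)..u, eta1 η t) + b * ∫ t in u..(2*u), eta1 η t := by
    rw [← hsplit]; ring
  have hE : b * (u * η (min 2 u)) = ε * η (min 2 u) := by rw [← hbu]; ring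
  linarith

end Aux

/-- Lemma on iterates of `q̃`: if `t < ξ^p(ε)` then `q̃^p(t) < ε`,
where `q̃(ε) := γ⁻¹(3ε) + ε`. -/
theorem xi_iterate_qtilde_iterate
    (η : ℝ → ℝ) (hη_range : ∀ ε : ℝ, 0 < ε → ε ≤ 2 → 0 < η ε ∧ η ε ≤ 1)
    (b : ℝ) (hb : 0 < b)
    (γinv : ℝ → ℝ) (hγinv_nonneg : ∀ s : ℝ, 0 ≤ s → 0 ≤ γinv s)
    (hγinv_right : ∀ s : ℝ, 0 ≤ s → gammaFun η b (γinv s) = s)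
    (hγinv_left : ∀ s : ℝ, 0 ≤ s → γinv (gammaFun η b s) = s)
    (qt : ℝ → ℝ) (hqt : ∀ ε : ℝ, qt ε = γinv (3 * ε) + ε) :
    ∀ (p : ℕ) (ε t : ℝ), 0 < ε → 0 ≤ t → t < (xiFun η b)^[p] ε →
      qt^[p] t < ε := by
  -- auxiliary facts
  have hxipos : ∀ ε : ℝ, 0 < ε → 0 < xiFun η b ε := by
    intro ε hε
    have hm : 0 < min 2 (ε / b) := lt_min two_pos (by positivity)
    have := (hη_range _ hm (min_le_left _ _)).1
    unfold xiFun
    positivity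
  have hqtnonneg : ∀ t : ℝ, 0 ≤ t → 0 ≤ qt t := by
    intro t ht
    rw [hqt]
    have := hγinv_nonneg (3 * t) (by linarith)
    linarith
  -- single step
  have step : ∀ ε t : ℝ, 0 < ε → 0 ≤ t → t < xiFun η b ε → qt t < ε := by
    intro ε t hε ht hlt
    set m := min 2 (ε / b) with hm
    have hmpos : 0 < m := lt_min two_pos (by positivity)
    obtain ⟨hη1, hη2⟩ := hη_range m hmpos (min_le_left _ _)
    have hxile : xiFun η b ε ≤ ε / 12 := by
      unfold xiFun
      rw [← hm]
      nlinarith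
    have ht12 : t < ε / 12 := hlt.trans_le hxile
    have hkey : 3 * t < gammaFun η b (ε - t) := by
      have h1 : ε / 4 * η m ≤ gammaFun η b (ε / 2) := gamma_lower hη_range hb hε
      have h2 : gammaFun η b (ε / 2) ≤ gammaFun η b (ε - t) :=
        gamma_mono hη_range hb (by linarith) (by linarith)
      have h3 : 3 * t < ε / 4 * η m := by
        calc 3 * t < 3 * xiFun η b ε := by linarith
          _ = ε / 4 * η m := by unfold xiFun; rw [← hm]; ring
      linarith
    have hγlt : γinv (3 * t) < ε - t := by
      by_contra h
      push_neg at h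
      have := gamma_mono hη_range hb (by linarith) h
      rw [hγinv_right (3 * t) (by linarith)] at this
      linarith
    rw [hqt]
    linarith
  -- iterate nonneg
  have hiter_nonneg : ∀ (p : ℕ) (t : ℝ), 0 ≤ t → 0 ≤ qt^[p] t := by
    intro p
    induction p with
    | zero => intro t ht; simpa using ht
    | succ n ih =>
      intro t ht
      rw [Function.iterate_succ_apply']
      exact hqtnonneg _ (ih t ht)
  -- main induction
  intro p
  induction p with
  | zero => intro ε t hε ht hlt; simpa using hlt
  | succ n ih =>
    intro ε t hε ht hlt
    rw [Function.iterate_succ_apply] at hlt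
    have hxe : 0 < xiFun η b ε := hxipos ε hε
    have h1 : qt^[n] t < xiFun η b ε := ih (xiFun η b ε) t hxe ht hlt
    rw [Function.iterate_succ_apply']
    exact step ε (qt^[n] t) hε (hiter_nonneg n t ht) h1
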